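/- Let (X_n)_{n ∈ ω} be a sequence of countably infinite sets and for each n let G_n be a group acting transitively on X_n with |X_n| ≥ 2. Let U be the set of all finite sequences (x_0, …, x_{n-1}) with x_i ∈ X_i, ordered by extension, and let 𝒢 be the group of tree automorphisms of U generated by the actions of the G_n on the (n+1)-th coordinates (fixing sequences of length ≤ n). Then definable closure for 𝒢 is locally finite on U if and only if definable closure for each G_n is locally finite on X_n. -/

import Mathlib

/-- Finite sequences (x_0, ..., x_{n-1}) with x_i in X i. -/
abbrev Seqs (X : ℕ → Type*) := Σ n, Π i : Fin n, X i

/-- Apply g to the (n+1)-th entry of a sequence (if present), fixing all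
sequences of length at most n and all other entries. -/
def actFun {X : ℕ → Type*} (n : ℕ) (g : X n → X n) : Seqs X → Seqs X :=
  fun σ => ⟨σ.1, fun i =>
    if h : (i : ℕ) = n then
      cast (congrArg X h).symm (g (cast (congrArg X h) (σ.2 i)))
    else σ.2 i⟩

/-- The permutation of the tree of finite sequences induced by a permutation
of X n acting on the (n+1)-th coordinate. -/
def actEquiv {X : ℕ → Type*} (n : ℕ) (g : Equiv.Perm (X n)) : Equiv.Perm (Seqs X) where
  toFun := actFun n g
  invFun := actFun n g.symm
  left_inv := by
    intro σ
    unfold actFun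
    refine Sigma.ext rfl ?_
    simp only [heq_eq_eq]
    funext i
    rcases i with ⟨iv, hi⟩
    by_cases h : iv = n
    · subst h
      simp
    · simp [h]
  right_inv := by
    intro σ
    unfold actFun
    refine Sigma.ext rfl ?_
    simp only [heq_eq_eq]
    funext i
    rcases i with ⟨iv, hi⟩
    by_cases h : iv = n
    · subst h
      simp
    · simp [h]

/-- The iterated wreath product: the subgroup of permutations of the tree of
sequences generated by the coordinatewise actions of the groups G n. -/
def wreath {X : ℕ → Type*} (G : ∀ n, Subgroup (Equiv.Perm (X n))) :
    Subgroup (Equiv.Perm (Seqs X)) :=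
  Subgroup.closure {π | ∃ n, ∃ g ∈ G n, π = actEquiv n g}

/-- The definable closure of A under a group G of permutations of Y. -/
def dclP {Y : Type*} (G : Subgroup (Equiv.Perm Y)) (A : Set Y) : Set Y :=
  {y | ∀ g ∈ G, (∀ a ∈ A, g a = a) → g y = y}

/-- Definable closure is locally finite. -/
def LocFin {Y : Type*} (G : Subgroup (Equiv.Perm Y)) : Prop :=
  ∀ A : Set Y, A.Finite → (dclP G A).Finite

/-- The prefix (extension) order on finite sequences. -/
def prefixLE {X : ℕ → Type*} (σ τ : Seqs X) : Prop :=
  ∃ h : σ.1 ≤ τ.1, ∀ i : Fin σ.1, σ.2 i = τ.2 ⟨i, lt_of_lt_of_le i.2 h⟩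

/-- Extend a sequence of length n by one further entry from X n. -/
def extSeq {X : ℕ → Type*} (σ : Seqs X) (x : X σ.1) : Seqs X :=
  ⟨σ.1 + 1, Fin.snoc (α := fun i : Fin (σ.1 + 1) => X i) σ.2 x⟩


lemma actEquiv_mem {X : ℕ → Type*} (G : ∀ n, Subgroup (Equiv.Perm (X n))) {n : ℕ}
    {g : Equiv.Perm (X n)} (hg : g ∈ G n) : actEquiv n g ∈ wreath G :=
  Subgroup.subset_closure ⟨n, g, hg, rfl⟩

lemma wreath_coordwise {X : ℕ → Type*} {G : ∀ n, Subgroup (Equiv.Perm (X n))}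
    {π : Equiv.Perm (Seqs X)} (hπ : π ∈ wreath G) :
    ∃ g : ∀ m, Equiv.Perm (X m), (∀ m, g m ∈ G m) ∧
      ∀ σ : Seqs X, π σ = ⟨σ.1, fun i => g i (σ.2 i)⟩ := by
  classical
  refine Subgroup.closure_induction ?_ ?_ ?_ ?_ hπ
  · rintro π ⟨n, g, hg, rfl⟩
    refine ⟨fun m => if h : n = m then h ▸ g else 1, ?_, ?_⟩
    · intro m
      by_cases h : n = m
      · subst h; simpa using hg
      · simp [h]
    · intro σ
      show actFun n g σ = _
      unfold actFun
      refine Sigma.ext rfl ?_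
      simp only [heq_eq_eq]
      funext i
      rcases i with ⟨iv, hi⟩
      by_cases h : iv = n
      · subst h; simp
      · simp [h, Ne.symm h]
  · exact ⟨fun m => 1, fun m => one_mem _, fun σ => rfl⟩
  · rintro π ρ - - ⟨gπ, hgπ, hπe⟩ ⟨gρ, hgρ, hρe⟩
    refine ⟨fun m => gπ m * gρ m, fun m => mul_mem (hgπ m) (hgρ m), fun σ => ?_⟩
    simp [Equiv.Perm.mul_apply, hρe σ, hπe]
  · rintro π - ⟨g, hg, he⟩
    refine ⟨fun m => (g m)⁻¹, fun m => inv_mem (hg m), fun σ => ?_⟩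
    have : π ⟨σ.1, fun i => (g i)⁻¹ (σ.2 i)⟩ = σ := by
      rw [he]
      simp
    exact (Equiv.symm_apply_eq π).mpr this.symm

lemma dcl_empty {Y : Type*} [Nontrivial Y] (G : Subgroup (Equiv.Perm Y))
    (htrans : ∀ x y : Y, ∃ g ∈ G, g x = y) : dclP G (∅ : Set Y) = ∅ := by
  ext x
  simp only [Set.mem_empty_iff_false, iff_false]
  intro hx
  obtain ⟨y, hy⟩ := exists_ne x
  obtain ⟨g, hg, hgx⟩ := htrans x y
  exact hy (hgx ▸ hx g hg (by simp))

lemma forward_dir {X : ℕ → Type*} [∀ n, Infinite (X n)]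
    (G : ∀ n, Subgroup (Equiv.Perm (X n)))
    (htrans : ∀ n, ∀ x y : X n, ∃ g ∈ G n, g x = y)
    (hLF : LocFin (wreath G)) (n : ℕ) : LocFin (G n) := by
  classical
  intro B hB
  rcases B.eq_empty_or_nonempty with rfl | ⟨b₀, hb₀⟩
  · rw [dcl_empty (G n) (htrans n)]; exact Set.finite_empty
  have p : ∀ i, X i := fun i => Classical.arbitrary _
  set emb : X n → Seqs X := fun x =>
    ⟨n + 1, fun i => if h : (i : ℕ) = n then cast (congrArg X h).symm x else p i⟩ with hemb
  have hinj : Function.Injective emb := by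
    intro x x' hxx
    have hxx2 : _ = _ := heq_eq_eq _ _ ▸ (Sigma.mk.inj_iff.mp hxx).2
    have := congrFun hxx2 ⟨n, Nat.lt_succ_self n⟩
    simpa using this
  have hsub : emb '' dclP (G n) B ⊆ dclP (wreath G) (emb '' B) := by
    rintro - ⟨y, hy, rfl⟩
    intro π hπ hfix
    obtain ⟨g, hgmem, heval⟩ := wreath_coordwise hπ
    have hn : ∀ b ∈ B, g n b = b := by
      intro b hb
      have h1 := hfix (emb b) ⟨b, hb, rfl⟩
      rw [heval] at h1
      have h2 : (fun i : Fin (n+1) => g i ((emb b).2 i)) = (emb b).2 := by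
        have := Sigma.mk.inj_iff.mp h1
        exact heq_eq_eq _ _ ▸ this.2
      have h3 := congrFun h2 ⟨n, Nat.lt_succ_self n⟩
      simpa [hemb, emb] using h3
    have hlow : ∀ i (hi : i < n), g i (p i) = p i := by
      intro i hi
      have h1 := hfix (emb b₀) ⟨b₀, hb₀, rfl⟩
      rw [heval] at h1
      have h2 : (fun j : Fin (n+1) => g j ((emb b₀).2 j)) = (emb b₀).2 := by
        have := Sigma.mk.inj_iff.mp h1
        exact heq_eq_eq _ _ ▸ this.2
      have h3 := congrFun h2 ⟨i, Nat.lt_succ_of_lt hi⟩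
      simpa [hemb, emb, Nat.ne_of_lt hi] using h3
    rw [heval]
    refine Sigma.ext rfl ?_
    simp only [heq_eq_eq]
    funext i
    rcases i with ⟨iv, hiv⟩
    by_cases h : iv = n
    · subst h
      simpa [hemb, emb] using hy (g iv) (hgmem iv) hn
    · have hivn : iv < n := Nat.lt_of_le_of_ne (Nat.lt_succ_iff.mp hiv) h
      simpa [hemb, emb, h] using hlow iv hivn
  have hfin : (emb '' dclP (G n) B).Finite :=
    Set.Finite.subset (hLF _ (hB.image emb)) hsub
  exact Set.Finite.of_finite_image hfin (hinj.injOn)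

lemma backward_dir {X : ℕ → Type*} [∀ n, Infinite (X n)]
    (G : ∀ n, Subgroup (Equiv.Perm (X n)))
    (htrans : ∀ n, ∀ x y : X n, ∃ g ∈ G n, g x = y)
    (hLF : ∀ n, LocFin (G n)) : LocFin (wreath G) := by
  classical
  intro A hA
  obtain ⟨N, hN⟩ := (hA.image Sigma.fst).bddAbove
  simp only [upperBounds, Set.mem_image, Set.mem_setOf_eq, forall_exists_index, and_imp] at hN
  have hNle : ∀ a ∈ A, a.1 ≤ N := fun a ha => hN a ha rfl
  have p : ∀ i, X i := fun i => Classical.arbitrary _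
  set Aset : ∀ i, Set (X i) := fun i => {x | ∃ a ∈ A, ∃ h : i < a.1, a.2 ⟨i, h⟩ = x} with hAset
  have hAsetFin : ∀ i, (Aset i).Finite := by
    intro i
    have : Aset i ⊆ (fun a : Seqs X => if h : i < a.1 then a.2 ⟨i, h⟩ else p i) '' A := by
      rintro x ⟨a, ha, h, rfl⟩
      exact ⟨a, ha, by simp [h]⟩
    exact (hA.image _).subset this
  -- each coordinate of an element of dcl is in the coordinatewise dcl
  have key2 : ∀ σ ∈ dclP (wreath G) A, ∀ iv (hiv : iv < σ.1),
      σ.2 ⟨iv, hiv⟩ ∈ dclP (G iv) (Aset iv) := by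
    intro σ hσ iv hiv g hg hfix
    have hπA : ∀ a ∈ A, (actEquiv iv g) a = a := by
      intro a ha
      show actFun iv g a = a
      unfold actFun
      refine Sigma.ext rfl ?_
      simp only [heq_eq_eq]
      funext j
      rcases j with ⟨jv, hj⟩
      by_cases h : jv = iv
      · subst h
        have : a.2 ⟨jv, hj⟩ ∈ Aset jv := ⟨a, ha, hj, rfl⟩
        simpa using hfix _ this
      · simp [h]
    have hfixσ := hσ (actEquiv iv g) (actEquiv_mem G hg) hπA
    have h2 : _ = _ := heq_eq_eq _ _ ▸ (Sigma.mk.inj_iff.mp hfixσ).2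
    have h3 := congrFun h2 ⟨iv, hiv⟩
    simpa using h3
  -- lengths are bounded
  have key1 : ∀ σ ∈ dclP (wreath G) A, σ.1 ≤ N := by
    intro σ hσ
    by_contra hlen
    push_neg at hlen
    set x := σ.2 ⟨N, hlen⟩ with hx
    obtain ⟨y, hy⟩ := exists_ne x
    obtain ⟨g, hg, hgx⟩ := htrans N x y
    have hπA : ∀ a ∈ A, (actEquiv N g) a = a := by
      intro a ha
      show actFun N g a = a
      unfold actFun
      refine Sigma.ext rfl ?_
      simp only [heq_eq_eq]
      funext j
      rcases j with ⟨jv, hj⟩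
      have : jv ≠ N := Nat.ne_of_lt (lt_of_lt_of_le hj (hNle a ha))
      simp [this]
    have hfixσ := hσ (actEquiv N g) (actEquiv_mem G hg) hπA
    have h2 : _ = _ := heq_eq_eq _ _ ▸ (Sigma.mk.inj_iff.mp hfixσ).2
    have h3 := congrFun h2 ⟨N, hlen⟩
    simp only [dif_pos, cast_eq] at h3
    exact hy (hgx.symm.trans h3)
  have hsub : dclP (wreath G) A ⊆
      ⋃ m ∈ Finset.range (N + 1),
        (fun f : ∀ i : Fin m, X i => (⟨m, f⟩ : Seqs X)) ''
          Set.pi Set.univ (fun i : Fin m => dclP (G i) (Aset i)) := by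
    intro σ hσ
    rcases σ with ⟨m, f⟩
    simp only [Set.mem_iUnion, Finset.mem_range]
    refine ⟨m, Nat.lt_succ_of_le (key1 _ hσ), f, ?_, rfl⟩
    intro i _
    exact key2 _ hσ i.1 i.2
  refine Set.Finite.subset ?_ hsub
  refine Set.Finite.biUnion (Finset.range (N + 1)).finite_toSet ?_
  intro m _
  refine Set.Finite.image _ (Set.Finite.pi ?_)
  intro i
  exact hLF i.1 (Aset i.1) (hAsetFin i.1)

theorem stmt13 {X : ℕ → Type*} [∀ n, Countable (X n)] [∀ n, Infinite (X n)]
    (G : ∀ n, Subgroup (Equiv.Perm (X n)))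
    (htrans : ∀ n, ∀ x y : X n, ∃ g ∈ G n, g x = y) :
    LocFin (wreath G) ↔ ∀ n, LocFin (G n) :=
  ⟨fun h n => forward_dir G htrans h n, fun h => backward_dir G htrans h⟩
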